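/- arXiv:1410.4582 — 3 statements merged into one kernel-verified Lean document; each statement's English description precedes it below -/
import Mathlib

section
/- Let d ≥ 2 and let Δ be a pure d-dimensional flag-no-square simplicial complex in which every (d−1)-dimensional face is contained in at least two facets. Then the number of facets satisfies f_d(Δ) > 5^{2^{d−1}} / ∏_{i=0}^{d−2} (d+1−i)^{2^i}. -/
open Finset

variable {V : Type} [DecidableEq V] [Fintype V]

/-- `K` is (the set of faces of) an abstract simplicial complex on `V`:
nonempty (contains the empty face) and closed under taking subsets. -/
def IsComplex (K : Finset (Finset V)) : Prop :=
  ∅ ∈ K ∧ ∀ σ ∈ K, ∀ τ ⊆ σ, τ ∈ K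

/-- The facets (maximal faces) of `K`. -/
def facets (K : Finset (Finset V)) : Finset (Finset V) :=
  K.filter fun σ => ∀ τ ∈ K, σ ⊆ τ → τ = σ

/-- `K` is pure `d`-dimensional: every facet has `d + 1` vertices. -/
def IsPure (K : Finset (Finset V)) (d : ℕ) : Prop :=
  ∀ σ ∈ facets K, σ.card = d + 1

/-- `fNum K i` is the number of `i`-dimensional faces (faces with `i + 1` vertices). -/
def fNum (K : Finset (Finset V)) (i : ℕ) : ℕ :=
  (K.filter fun σ => σ.card = i + 1).card

/-- `K` is flag: every set of vertices of `K` that are pairwise joined by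
edges of `K` is a face of `K`. -/
def IsFlag (K : Finset (Finset V)) : Prop :=
  ∀ τ : Finset V, (∀ v ∈ τ, ({v} : Finset V) ∈ K) →
    (∀ u ∈ τ, ∀ w ∈ τ, u ≠ w → ({u, w} : Finset V) ∈ K) → τ ∈ K

/-- `K` has no induced 4-cycle: there are no four distinct vertices `a b c d`
with `ab, bc, cd, da` faces and `ac, bd` non-faces. -/
def NoSquare (K : Finset (Finset V)) : Prop :=
  ¬ ∃ a b c d : V, ({a, b, c, d} : Finset V).card = 4 ∧
    ({a, b} : Finset V) ∈ K ∧ ({b, c} : Finset V) ∈ K ∧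
    ({c, d} : Finset V) ∈ K ∧ ({d, a} : Finset V) ∈ K ∧
    ({a, c} : Finset V) ∉ K ∧ ({b, d} : Finset V) ∉ K

/-- Every face with `d` vertices (i.e. of dimension `d - 1`) is contained in
at least two facets. -/
def NoFree (K : Finset (Finset V)) (d : ℕ) : Prop :=
  ∀ σ ∈ K, σ.card = d → 2 ≤ ((facets K).filter fun F => σ ⊆ F).card

/-- The link of a face `σ`. -/
def link (K : Finset (Finset V)) (σ : Finset V) : Finset (Finset V) :=
  K.filter fun τ => τ ∩ σ = ∅ ∧ τ ∪ σ ∈ K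


section Aux
variable {K : Finset (Finset V)}

lemma facet_mem {σ : Finset V} (h : σ ∈ facets K) : σ ∈ K := (mem_filter.mp h).1

lemma facet_max {σ : Finset V} (h : σ ∈ facets K) : ∀ τ ∈ K, σ ⊆ τ → τ = σ :=
  (mem_filter.mp h).2

lemma face_sub_mem (hK : IsComplex K) {σ τ : Finset V} (hσ : σ ∈ K) (h : τ ⊆ σ) : τ ∈ K :=
  hK.2 σ hσ τ h

lemma exists_facet (hK : IsComplex K) {σ : Finset V} (hσ : σ ∈ K) :
    ∃ F ∈ facets K, σ ⊆ F := by
  classical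
  obtain ⟨F, hF, hmax⟩ := (K.filter (fun τ => σ ⊆ τ)).exists_max_image Finset.card
    ⟨σ, by simp [hσ]⟩
  rw [mem_filter] at hF
  refine ⟨F, mem_filter.mpr ⟨hF.1, fun τ hτ hsub => ?_⟩, hF.2⟩
  exact (Finset.eq_of_subset_of_card_le hsub
    (hmax τ (mem_filter.mpr ⟨hτ, hF.2.trans hsub⟩))).symm

lemma card_le_of_pure {d : ℕ} (hK : IsComplex K) (hpure : IsPure K d)
    {σ : Finset V} (hσ : σ ∈ K) : σ.card ≤ d + 1 := by
  obtain ⟨F, hF, hsub⟩ := exists_facet hK hσ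
  calc σ.card ≤ F.card := Finset.card_le_card hsub
    _ = d + 1 := hpure F hF

lemma facet_of_card {d : ℕ} (hK : IsComplex K) (hpure : IsPure K d)
    {σ : Finset V} (hσ : σ ∈ K) (hc : σ.card = d + 1) : σ ∈ facets K := by
  obtain ⟨F, hF, hsub⟩ := exists_facet hK hσ
  have : σ = F := Finset.eq_of_subset_of_card_le hsub (by rw [hc, hpure F hF])
  rwa [this]

lemma fNum_eq_card_facets {d : ℕ} (hK : IsComplex K) (hpure : IsPure K d) :
    fNum K d = (facets K).card := by
  have : K.filter (fun σ => σ.card = d + 1) = facets K := by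
    ext σ
    rw [mem_filter]
    constructor
    · rintro ⟨h1, h2⟩; exact facet_of_card hK hpure h1 h2
    · intro h; exact ⟨facet_mem h, hpure σ h⟩
  rw [fNum, this]

end Aux

section LinkAux
variable {K : Finset (Finset V)} {v : V}

lemma card_union_singleton {τ : Finset V} (h : v ∉ τ) : (τ ∪ {v}).card = τ.card + 1 := by
  rw [union_comm, ← insert_eq, card_insert_of_notMem h]

lemma erase_union_singleton {F : Finset V} (h : v ∈ F) : (F.erase v) ∪ {v} = F := by
  rw [union_comm, ← insert_eq, Finset.insert_erase h]

lemma mem_link (hK : IsComplex K) {τ : Finset V} :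
    τ ∈ link K {v} ↔ v ∉ τ ∧ τ ∪ {v} ∈ K := by
  rw [link, mem_filter]
  constructor
  · rintro ⟨h1, h2, h3⟩
    refine ⟨fun hv => ?_, h3⟩
    have : v ∈ τ ∩ {v} := mem_inter.mpr ⟨hv, mem_singleton_self v⟩
    rw [h2] at this
    exact notMem_empty v this
  · rintro ⟨h1, h2⟩
    refine ⟨face_sub_mem hK h2 subset_union_left, ?_, h2⟩
    ext x
    simp only [mem_inter, mem_singleton, notMem_empty, iff_false, not_and]
    rintro hx rfl; exact h1 hx

lemma link_complex (hK : IsComplex K) (hv : ({v} : Finset V) ∈ K) :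
    IsComplex (link K {v}) := by
  constructor
  · rw [mem_link hK]
    simpa using hv
  · intro σ hσ τ hτ
    rw [mem_link hK] at hσ ⊢
    exact ⟨fun hvτ => hσ.1 (hτ hvτ),
      face_sub_mem hK hσ.2 (union_subset_union_left hτ)⟩

lemma link_facet_iff (hK : IsComplex K) {τ : Finset V} :
    τ ∈ facets (link K {v}) ↔ v ∉ τ ∧ τ ∪ {v} ∈ facets K := by
  constructor
  · intro h
    have h1 := facet_mem h
    rw [mem_link hK] at h1
    refine ⟨h1.1, mem_filter.mpr ⟨h1.2, fun ρ hρ hsub => ?_⟩⟩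
    have hvρ : v ∈ ρ := hsub (by simp)
    have hρ' : ρ.erase v ∈ link K {v} := by
      rw [mem_link hK, erase_union_singleton hvρ]
      exact ⟨notMem_erase v ρ, hρ⟩
    have hτρ' : τ ⊆ ρ.erase v := by
      intro x hx
      exact mem_erase.mpr ⟨fun he => h1.1 (he ▸ hx), hsub (mem_union_left _ hx)⟩
    have := facet_max h _ hρ' hτρ'
    rw [← erase_union_singleton hvρ, this]
  · rintro ⟨hvτ, hF⟩
    refine mem_filter.mpr ⟨(mem_link hK).mpr ⟨hvτ, facet_mem hF⟩, fun ρ hρ hsub => ?_⟩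
    rw [mem_link hK] at hρ
    have := facet_max hF _ hρ.2 (union_subset_union_left hsub)
    have h2 : (ρ ∪ {v}).erase v = (τ ∪ {v}).erase v := by rw [this]
    rwa [union_comm ρ, union_comm τ, ← insert_eq, ← insert_eq, erase_insert hρ.1,
      erase_insert hvτ] at h2

lemma link_pure {d : ℕ} (hK : IsComplex K) (hpure : IsPure K (d + 1)) :
    IsPure (link K {v}) d := by
  intro τ hτ
  rw [link_facet_iff hK] at hτ
  have := hpure _ hτ.2
  rw [card_union_singleton hτ.1] at this
  omega

lemma link_flag (hK : IsComplex K) (hv : ({v} : Finset V) ∈ K) (hflag : IsFlag K) :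
    IsFlag (link K {v}) := by
  intro τ hvert hedge
  have hvτ : v ∉ τ := fun h => by
    have := (mem_link hK).mp (hvert v h)
    simp at this
  rw [mem_link hK]
  refine ⟨hvτ, hflag _ ?_ ?_⟩
  · intro u hu
    rcases mem_union.mp hu with h | h
    · exact (mem_filter.mp (hvert u h)).1
    · rw [mem_singleton.mp h]; exact hv
  · intro u hu w hw huw
    rcases mem_union.mp hu with h1 | h1 <;> rcases mem_union.mp hw with h2 | h2
    · exact face_sub_mem hK ((mem_link hK).mp (hedge u h1 w h2 huw)).2 subset_union_left
    · rw [mem_singleton.mp h2]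
      have := ((mem_link hK).mp (hvert u h1)).2
      rwa [← insert_eq] at this
    · rw [mem_singleton.mp h1, pair_comm]
      have := ((mem_link hK).mp (hvert w h2)).2
      rwa [← insert_eq] at this
    · exact absurd (mem_singleton.mp h1 ▸ mem_singleton.mp h2 ▸ rfl) huw

lemma pair_union_singleton {x y : V} : ({x, y} : Finset V) ∪ {v} = {x, y, v} := by
  ext u; simp [or_assoc]

lemma link_nonedge (hK : IsComplex K) (hv : ({v} : Finset V) ∈ K) (hflag : IsFlag K)
    {x y : V} (hx : ({x} : Finset V) ∈ link K {v}) (hy : ({y} : Finset V) ∈ link K {v})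
    (hxy : ({x, y} : Finset V) ∉ link K {v}) : ({x, y} : Finset V) ∉ K := by
  intro hmem
  have hx' := (mem_link hK).mp hx
  have hy' := (mem_link hK).mp hy
  have hxv : x ≠ v := fun h => hx'.1 (by rw [h]; exact mem_singleton_self v)
  have hyv : y ≠ v := fun h => hy'.1 (by rw [h]; exact mem_singleton_self v)
  have hxvK : ({x, v} : Finset V) ∈ K := by
    have := hx'.2; rwa [← insert_eq] at this
  have hyvK : ({y, v} : Finset V) ∈ K := by
    have := hy'.2; rwa [← insert_eq] at this
  apply hxy
  rw [mem_link hK]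
  constructor
  · intro h
    rcases mem_insert.mp h with h | h
    · exact hxv h.symm
    · exact hyv (mem_singleton.mp h).symm
  · rw [pair_union_singleton]
    apply hflag
    · intro u hu
      rcases mem_insert.mp hu with rfl | hu
      · exact face_sub_mem hK hx'.2 (by intro t ht; simpa using Or.inl (mem_singleton.mp ht))
      rcases mem_insert.mp hu with rfl | hu
      · exact face_sub_mem hK hy'.2 (by intro t ht; simpa using Or.inl (mem_singleton.mp ht))
      · rw [mem_singleton.mp hu]; exact hv
    · intro p hp q hq hpq
      have hmem' : ∀ a b : V, a ∈ ({x, y, v} : Finset V) → b ∈ ({x, y, v} : Finset V) →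
          a ≠ b → (a = x ∧ b = y) ∨ (a = y ∧ b = x) ∨ (a = x ∧ b = v) ∨ (a = v ∧ b = x) ∨
          (a = y ∧ b = v) ∨ (a = v ∧ b = y) → True := fun _ _ _ _ _ _ => trivial
      clear hmem'
      simp only [mem_insert, mem_singleton] at hp hq
      rcases hp with rfl | rfl | rfl <;> rcases hq with rfl | rfl | rfl <;>
        first
          | exact absurd rfl hpq
          | exact hmem
          | exact hxvK
          | exact hyvK
          | (rw [pair_comm]; first | exact hmem | exact hxvK | exact hyvK)

lemma link_nosquare (hK : IsComplex K) (hv : ({v} : Finset V) ∈ K) (hflag : IsFlag K)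
    (hns : NoSquare K) : NoSquare (link K {v}) := by
  rintro ⟨a, b, c, d, hcard, hab, hbc, hcd, hda, hac, hbd⟩
  have hLc := link_complex hK hv
  have sing : ∀ x y : V, ({x, y} : Finset V) ∈ link K {v} → ({x} : Finset V) ∈ link K {v} :=
    fun x y h => face_sub_mem hLc h (by intro t ht; simpa using Or.inl (mem_singleton.mp ht))
  have ha := sing a b hab
  have hb := sing b c hbc
  have hc := sing c d hcd
  have hd := sing d a hda
  exact hns ⟨a, b, c, d, hcard, (mem_filter.mp hab).1, (mem_filter.mp hbc).1,
    (mem_filter.mp hcd).1, (mem_filter.mp hda).1,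
    link_nonedge hK hv hflag ha hc hac, link_nonedge hK hv hflag hb hd hbd⟩

lemma link_nofree {m : ℕ} (hK : IsComplex K) (hfree : NoFree K (m + 1)) :
    NoFree (link K {v}) m := by
  intro σ hσ hcard
  have hσ' := (mem_link hK).mp hσ
  have h1 : (σ ∪ {v}).card = m + 1 := by rw [card_union_singleton hσ'.1, hcard]
  have h2 := hfree _ hσ'.2 h1
  refine le_trans h2 (Finset.card_le_card_of_injOn (fun F => F.erase v) ?_ ?_)
  · intro F hF
    rw [Finset.mem_coe, mem_filter] at hF ⊢
    have hvF : v ∈ F := hF.2 (mem_union_right _ (mem_singleton_self v))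
    constructor
    · rw [link_facet_iff hK]
      exact ⟨notMem_erase v F, by rw [erase_union_singleton hvF]; exact hF.1⟩
    · intro x hx
      exact mem_erase.mpr ⟨fun h => hσ'.1 (h ▸ hx), hF.2 (mem_union_left _ hx)⟩
  · intro F1 h1' F2 h2' he
    have hv1 : v ∈ F1 := (mem_filter.mp h1').2 (mem_union_right _ (mem_singleton_self v))
    have hv2 : v ∈ F2 := (mem_filter.mp h2').2 (mem_union_right _ (mem_singleton_self v))
    rw [← erase_union_singleton hv1, ← erase_union_singleton hv2]
    simp only at he
    rw [he]

end LinkAux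

section Key
variable {K : Finset (Finset V)} {v : V} {d : ℕ}

lemma pair_subset' {a b : V} {s : Finset V} (ha : a ∈ s) (hb : b ∈ s) :
    ({a, b} : Finset V) ⊆ s :=
  insert_subset_iff.mpr ⟨ha, singleton_subset_iff.mpr hb⟩

lemma card_four {a b c d : V} (h1 : a ≠ b) (h2 : a ≠ c) (h3 : a ≠ d) (h4 : b ≠ c)
    (h5 : b ≠ d) (h6 : c ≠ d) : ({a, b, c, d} : Finset V).card = 4 := by
  rw [card_insert_of_notMem (by simp [h1, h2, h3]),
    card_insert_of_notMem (by simp [h4, h5]),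
    card_insert_of_notMem (by simp [h6]), card_singleton]

lemma exists_far_vertex (hK : IsComplex K) (hpure : IsPure K d) (hflag : IsFlag K)
    (hfree : NoFree K d) {F : Finset V} (hF : F ∈ facets K) (hvF : v ∈ F) :
    ∃ w : V, w ∉ F ∧ ({w} : Finset V) ∈ K ∧ ({v, w} : Finset V) ∉ K ∧
      (F.erase v) ∪ {w} ∈ facets K := by
  set σ := F.erase v with hσdef
  have hσK : σ ∈ K := face_sub_mem hK (facet_mem hF) (erase_subset v F)
  have hσcard : σ.card = d := by
    rw [hσdef, card_erase_of_mem hvF, hpure F hF]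
    omega
  have hFfil : F ∈ (facets K).filter (fun G => σ ⊆ G) :=
    mem_filter.mpr ⟨hF, erase_subset v F⟩
  obtain ⟨F', hF', hne⟩ := Finset.exists_mem_ne
    (lt_of_lt_of_le one_lt_two (hfree σ hσK hσcard)) F
  rw [mem_filter] at hF'
  obtain ⟨hF'fac, hσF'⟩ := hF'
  have hvF' : v ∉ F' := by
    intro hv'
    apply hne
    apply facet_max hF _ (facet_mem hF'fac)
    intro x hx
    rcases eq_or_ne x v with rfl | hxv
    · exact hv'
    · exact hσF' (mem_erase.mpr ⟨hxv, hx⟩)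
  have hex : (F' \ σ).Nonempty := by
    rw [← Finset.card_pos, card_sdiff_of_subset hσF', hpure F' hF'fac, hσcard]
    omega
  obtain ⟨w, hw⟩ := hex
  rw [mem_sdiff] at hw
  have hwv : w ≠ v := fun h => hvF' (h ▸ hw.1)
  have hwF : w ∉ F := by
    intro h
    exact hw.2 (mem_erase.mpr ⟨hwv, h⟩)
  have hF'eq : σ ∪ {w} = F' := by
    apply Finset.eq_of_subset_of_card_le
    · exact union_subset hσF' (singleton_subset_iff.mpr hw.1)
    · rw [card_union_singleton hw.2, hσcard, hpure F' hF'fac]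
  refine ⟨w, hwF, face_sub_mem hK (facet_mem hF'fac) (singleton_subset_iff.mpr hw.1),
    ?_, hF'eq ▸ hF'fac⟩
  intro hvwK
  have hbig : F ∪ {w} ∈ K := by
    apply hflag
    · intro u hu
      rcases mem_union.mp hu with h | h
      · exact face_sub_mem hK (facet_mem hF) (singleton_subset_iff.mpr h)
      · rw [mem_singleton.mp h]
        exact face_sub_mem hK (facet_mem hF'fac) (singleton_subset_iff.mpr hw.1)
    · intro p hp q hq hpq
      rcases mem_union.mp hp with h1 | h1 <;> rcases mem_union.mp hq with h2 | h2
      · exact face_sub_mem hK (facet_mem hF) (pair_subset' h1 h2)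
      · rw [mem_singleton.mp h2]
        rcases eq_or_ne p v with rfl | hpv
        · exact hvwK
        · exact face_sub_mem hK (facet_mem hF'fac)
            (hF'eq ▸ pair_subset' (mem_union_left _ (mem_erase.mpr ⟨hpv, h1⟩))
              (mem_union_right _ (mem_singleton_self w)))
      · rw [mem_singleton.mp h1, pair_comm]
        rcases eq_or_ne q v with rfl | hqv
        · exact hvwK
        · exact face_sub_mem hK (facet_mem hF'fac)
            (hF'eq ▸ pair_subset' (mem_union_left _ (mem_erase.mpr ⟨hqv, h2⟩))
              (mem_union_right _ (mem_singleton_self w)))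
      · exact absurd (mem_singleton.mp h1 ▸ mem_singleton.mp h2 ▸ rfl) hpq
  have := card_le_of_pure hK hpure hbig
  rw [card_union_singleton hwF, hpure F hF] at this
  omega

lemma far_vertex_inj (hK : IsComplex K) (hpure : IsPure K d) (hflag : IsFlag K)
    (hns : NoSquare K) {F1 F2 : Finset V} (hF1 : F1 ∈ facets K) (hF2 : F2 ∈ facets K)
    (hv1 : v ∈ F1) (hv2 : v ∈ F2) {w : V} (hw1 : w ∉ F1) (hw2 : w ∉ F2)
    (hvw : ({v, w} : Finset V) ∉ K)
    (hfac1 : (F1.erase v) ∪ {w} ∈ K) (hfac2 : (F2.erase v) ∪ {w} ∈ K) : F1 = F2 := by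
  by_contra hne
  have hvwne : v ≠ w := by
    rintro rfl
    exact hvw (by
      have : ({v, v} : Finset V) = {v} := by simp
      rw [this]
      exact face_sub_mem hK (facet_mem hF1) (singleton_subset_iff.mpr hv1))
  have hcross : ∀ x ∈ F1.erase v, ∀ y ∈ F2.erase v, x ≠ y → ({x, y} : Finset V) ∈ K := by
    intro x hx y hy hxy
    by_contra hxyK
    have hx' := mem_erase.mp hx
    have hy' := mem_erase.mp hy
    apply hns
    refine ⟨v, x, w, y, ?_, ?_, ?_, ?_, ?_, hvw, hxyK⟩
    · exact card_four (Ne.symm hx'.1) hvwne (Ne.symm hy'.1)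
        (fun h => hw1 (h ▸ hx'.2)) hxy (fun h => hw2 (h.symm ▸ hy'.2))
    · exact face_sub_mem hK (facet_mem hF1) (pair_subset' hv1 hx'.2)
    · exact face_sub_mem hK hfac1
        (pair_subset' (mem_union_left _ hx) (mem_union_right _ (mem_singleton_self w)))
    · exact face_sub_mem hK hfac2
        (pair_comm w y ▸ pair_subset' (mem_union_left _ hy)
          (mem_union_right _ (mem_singleton_self w)))
    · exact face_sub_mem hK (facet_mem hF2) (pair_subset' hy'.2 hv2)
  -- now F1 ∪ F2.erase v is a big clique
  have hexy : (F2 \ F1).Nonempty := by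
    rw [← Finset.card_pos]
    rcases Finset.eq_empty_or_nonempty (F2 \ F1) with h | h
    · exfalso
      apply hne
      symm
      apply Finset.eq_of_subset_of_card_le (fun x hx => by
        by_contra hxF1
        exact absurd (mem_sdiff.mpr ⟨hx, hxF1⟩) (by rw [h]; exact notMem_empty x))
      rw [hpure F1 hF1, hpure F2 hF2]
    · exact card_pos.mpr h
  obtain ⟨y, hy⟩ := hexy
  rw [mem_sdiff] at hy
  have hbig : F1 ∪ F2.erase v ∈ K := by
    apply hflag
    · intro u hu
      rcases mem_union.mp hu with h | h
      · exact face_sub_mem hK (facet_mem hF1) (singleton_subset_iff.mpr h)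
      · exact face_sub_mem hK (facet_mem hF2)
          (singleton_subset_iff.mpr (mem_of_mem_erase h))
    · intro p hp q hq hpq
      rcases mem_union.mp hp with h1 | h1 <;> rcases mem_union.mp hq with h2 | h2
      · exact face_sub_mem hK (facet_mem hF1) (pair_subset' h1 h2)
      · rcases eq_or_ne p v with rfl | hpv
        · exact face_sub_mem hK (facet_mem hF2) (pair_subset' hv2 (mem_of_mem_erase h2))
        · exact hcross p (mem_erase.mpr ⟨hpv, h1⟩) q h2 hpq
      · rcases eq_or_ne q v with hqv | hqv
        · have hpq2 : ({p, q} : Finset V) = {q, p} := pair_comm p q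
          rw [hpq2, hqv]
          exact face_sub_mem hK (facet_mem hF2) (pair_subset' hv2 (mem_of_mem_erase h1))
        · exact pair_comm q p ▸ hcross q (mem_erase.mpr ⟨hqv, h2⟩) p h1 (Ne.symm hpq)
      · exact face_sub_mem hK (facet_mem hF2)
          (pair_subset' (mem_of_mem_erase h1) (mem_of_mem_erase h2))
  have hcard := card_le_of_pure hK hpure hbig
  have hsub : insert y F1 ⊆ F1 ∪ F2.erase v := by
    intro x hx
    rcases mem_insert.mp hx with rfl | hx
    · exact mem_union_right _ (mem_erase.mpr ⟨fun h => hy.2 (h ▸ hv1), hy.1⟩)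
    · exact mem_union_left _ hx
  have : (insert y F1).card ≤ d + 1 := le_trans (Finset.card_le_card hsub) hcard
  rw [card_insert_of_notMem hy.2, hpure F1 hF1] at this
  omega

end Key

section Count
variable {K : Finset (Finset V)} {v : V} {d : ℕ}

lemma vertex_bound (hK : IsComplex K) (hpure : IsPure K d) (hflag : IsFlag K)
    (hns : NoSquare K) (hfree : NoFree K d) (hv : ({v} : Finset V) ∈ K) :
    ((facets K).filter fun F => v ∈ F).card + (d + 1)
      ≤ (univ.filter fun u : V => ({u} : Finset V) ∈ K).card := by
  classical
  obtain ⟨F₀, hF₀, hvF₀⟩ := exists_facet hK hv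
  rw [singleton_subset_iff] at hvF₀
  set W := univ.filter (fun w : V => ({w} : Finset V) ∈ K ∧ ({v, w} : Finset V) ∉ K) with hW
  set P : Finset V → Prop := fun F => ∃ w : V, w ∉ F ∧ ({w} : Finset V) ∈ K ∧
    ({v, w} : Finset V) ∉ K ∧ (F.erase v) ∪ {w} ∈ facets K with hP
  have step1 : ((facets K).filter fun F => v ∈ F).card ≤ W.card := by
    apply Finset.card_le_card_of_injOn (fun F => if h : P F then h.choose else v)
    · intro F hF
      rw [Finset.mem_coe, mem_filter] at hF
      have hPF : P F := exists_far_vertex hK hpure hflag hfree hF.1 hF.2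
      obtain ⟨_, hw2, hw3, _⟩ := hPF.choose_spec
      simp only [dif_pos hPF]
      exact mem_filter.mpr ⟨mem_univ _, hw2, hw3⟩
    · intro F1 hF1 F2 hF2 heq
      rw [Finset.mem_coe, mem_filter] at hF1 hF2
      have hP1 : P F1 := exists_far_vertex hK hpure hflag hfree hF1.1 hF1.2
      have hP2 : P F2 := exists_far_vertex hK hpure hflag hfree hF2.1 hF2.2
      dsimp only at heq
      rw [dif_pos hP1, dif_pos hP2] at heq
      obtain ⟨ha1, _, ha3, ha4⟩ := hP1.choose_spec
      obtain ⟨hb1, _, hb3, hb4⟩ := hP2.choose_spec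
      rw [heq] at ha1 ha3 ha4
      exact far_vertex_inj hK hpure hflag hns hF1.1 hF2.1 hF1.2 hF2.2 ha1 hb1 hb3
        (facet_mem ha4) (facet_mem hb4)
  have hdisj : Disjoint W F₀ := by
    rw [Finset.disjoint_left]
    intro u hu huF₀
    rw [hW, mem_filter] at hu
    exact hu.2.2 (face_sub_mem hK (facet_mem hF₀) (pair_subset' hvF₀ huF₀))
  have hsub : W ∪ F₀ ⊆ univ.filter fun u : V => ({u} : Finset V) ∈ K := by
    intro u hu
    rcases mem_union.mp hu with h | h
    · rw [hW, mem_filter] at h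
      exact mem_filter.mpr ⟨mem_univ _, h.2.1⟩
    · exact mem_filter.mpr ⟨mem_univ _,
        face_sub_mem hK (facet_mem hF₀) (singleton_subset_iff.mpr h)⟩
  calc ((facets K).filter fun F => v ∈ F).card + (d + 1)
      ≤ W.card + F₀.card := by rw [hpure F₀ hF₀]; omega
    _ = (W ∪ F₀).card := (Finset.card_union_of_disjoint hdisj).symm
    _ ≤ _ := Finset.card_le_card hsub

lemma sum_count (hpure : IsPure K d) :
    (∑ v ∈ univ.filter fun u : V => ({u} : Finset V) ∈ K,
      ((facets K).filter fun F => v ∈ F).card) ≤ (d + 1) * (facets K).card := by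
  classical
  calc (∑ v ∈ univ.filter fun u : V => ({u} : Finset V) ∈ K,
        ((facets K).filter fun F => v ∈ F).card)
      = ∑ v ∈ univ.filter fun u : V => ({u} : Finset V) ∈ K,
          ∑ F ∈ facets K, if v ∈ F then 1 else 0 :=
        Finset.sum_congr rfl fun v _ => Finset.card_filter _ _
    _ = ∑ F ∈ facets K, ∑ v ∈ univ.filter fun u : V => ({u} : Finset V) ∈ K,
          if v ∈ F then 1 else 0 := Finset.sum_comm
    _ ≤ ∑ F ∈ facets K, (d + 1) := by
        apply Finset.sum_le_sum
        intro F hF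
        rw [← Finset.card_filter]
        calc ((univ.filter fun u : V => ({u} : Finset V) ∈ K).filter fun v => v ∈ F).card
            ≤ F.card := Finset.card_le_card (fun x hx => (mem_filter.mp hx).2)
          _ = d + 1 := hpure F hF
    _ = (d + 1) * (facets K).card := by rw [Finset.sum_const, smul_eq_mul, mul_comm]

end Count

section Base
variable {K : Finset (Finset V)}

lemma no_triangle (hK : IsComplex K) (hpure : IsPure K 1) (hflag : IsFlag K)
    {x y z : V} (hxy : x ≠ y) (hxz : x ≠ z) (hyz : y ≠ z)
    (e1 : ({x, y} : Finset V) ∈ K) (e2 : ({y, z} : Finset V) ∈ K)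
    (e3 : ({x, z} : Finset V) ∈ K) : False := by
  have htri : ({x, y, z} : Finset V) ∈ K := by
    apply hflag
    · intro u hu
      rcases mem_insert.mp hu with rfl | hu
      · exact face_sub_mem hK e1 (by intro t ht; rw [mem_singleton.mp ht]; simp)
      rcases mem_insert.mp hu with rfl | hu
      · exact face_sub_mem hK e1 (by intro t ht; rw [mem_singleton.mp ht]; simp)
      · rw [mem_singleton.mp hu]
        exact face_sub_mem hK e2 (by intro t ht; rw [mem_singleton.mp ht]; simp)
    · intro p hp q hq hpq
      simp only [mem_insert, mem_singleton] at hp hq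
      rcases hp with rfl | rfl | rfl <;> rcases hq with rfl | rfl | rfl <;>
        first
          | exact absurd rfl hpq
          | exact e1 | exact e2 | exact e3
          | (rw [pair_comm]; first | exact e1 | exact e2 | exact e3)
  have hcard : ({x, y, z} : Finset V).card = 3 := by
    rw [card_insert_of_notMem (by simp [hxy, hxz]),
      card_insert_of_notMem (by simp [hyz]), card_singleton]
  have := card_le_of_pure hK hpure htri
  omega

lemma second_facet (hfree : NoFree K 1) {x : V} (hx : ({x} : Finset V) ∈ K)
    {E : Finset V} (hE : E ∈ facets K) (hxE : x ∈ E) :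
    ∃ E' ∈ facets K, x ∈ E' ∧ E' ≠ E := by
  have h := hfree {x} hx (card_singleton x)
  have hEf : E ∈ (facets K).filter fun F => {x} ⊆ F :=
    mem_filter.mpr ⟨hE, singleton_subset_iff.mpr hxE⟩
  obtain ⟨E', hE', hne⟩ := Finset.exists_mem_ne
    (lt_of_lt_of_le one_lt_two h) E
  rw [mem_filter, singleton_subset_iff] at hE'
  exact ⟨E', hE'.1, hE'.2, hne⟩

lemma facet_other (hpure : IsPure K 1) {E : Finset V} (hE : E ∈ facets K) {x : V}
    (hxE : x ∈ E) : ∃ y, y ≠ x ∧ E = {x, y} := by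
  obtain ⟨p, q, hpq, hEeq⟩ := Finset.card_eq_two.mp (by rw [hpure E hE])
  subst hEeq
  rcases mem_insert.mp hxE with rfl | h
  · exact ⟨q, hpq.symm, rfl⟩
  · rw [mem_singleton.mp h]
    exact ⟨p, hpq, pair_comm p q⟩

lemma base_case (hK : IsComplex K) (hpure : IsPure K 1) (hflag : IsFlag K)
    (hns : NoSquare K) (hfree : NoFree K 1) : 5 ≤ fNum K 1 := by
  classical
  obtain ⟨F₀, hF₀, -⟩ := exists_facet hK hK.1
  have singmem : ∀ (E : Finset V), E ∈ facets K → ∀ x ∈ E, ({x} : Finset V) ∈ K :=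
    fun E hE x hx => face_sub_mem hK (facet_mem hE) (singleton_subset_iff.mpr hx)
  obtain ⟨a, b, hab, rfl⟩ := Finset.card_eq_two.mp (hpure F₀ hF₀)
  have haK := singmem _ hF₀ a (by simp)
  have hbK := singmem _ hF₀ b (by simp)
  obtain ⟨E1, hE1, haE1, hE1ne⟩ := second_facet hfree haK hF₀ (by simp)
  obtain ⟨c, hca, rfl⟩ := facet_other hpure hE1 haE1
  have hcb : c ≠ b := fun h => hE1ne (by rw [h])
  have hcK := singmem _ hE1 c (by simp)
  obtain ⟨E2, hE2, hbE2, hE2ne⟩ := second_facet hfree hbK hF₀ (by simp)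
  obtain ⟨e, heb, rfl⟩ := facet_other hpure hE2 hbE2
  have hea : e ≠ a := fun h => hE2ne (by rw [h]; exact pair_comm b a)
  have hec : e ≠ c := fun h =>
    no_triangle hK hpure hflag hab (Ne.symm hca) (Ne.symm hcb)
      (facet_mem hF₀) (by rw [← h]; exact facet_mem hE2) (facet_mem hE1)
  obtain ⟨E3, hE3, hcE3, hE3ne⟩ := second_facet hfree hcK hE1 (by simp)
  obtain ⟨f, hfc, rfl⟩ := facet_other hpure hE3 hcE3
  have hfa : f ≠ a := fun h => hE3ne (by rw [h]; exact pair_comm c a)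
  have hfb : f ≠ b := fun h =>
    no_triangle hK hpure hflag hab (Ne.symm hca) (Ne.symm hcb)
      (facet_mem hF₀) (by rw [← h, pair_comm]; exact facet_mem hE3) (facet_mem hE1)
  have hfK := singmem _ hE3 f (by simp)
  obtain ⟨E4, hE4, hfE4, hE4ne⟩ := second_facet hfree hfK hE3 (by simp)
  obtain ⟨g, hgf, rfl⟩ := facet_other hpure hE4 hfE4
  have hgc : g ≠ c := fun h => hE4ne (by rw [h]; exact pair_comm f c)
  have haf : ({a, f} : Finset V) ∉ K := fun h =>
    no_triangle hK hpure hflag (Ne.symm hca) (Ne.symm hfa) (Ne.symm hfc)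
      (facet_mem hE1) (facet_mem hE3) h
  have hbc : ({b, c} : Finset V) ∉ K := fun h =>
    no_triangle hK hpure hflag hab (Ne.symm hca) (Ne.symm hcb)
      (facet_mem hF₀) h (facet_mem hE1)
  have hga : g ≠ a := fun h =>
    haf (by rw [pair_comm, ← h]; exact facet_mem hE4)
  have hgb : g ≠ b := by
    intro h
    apply hns
    refine ⟨a, b, f, c, ?_, facet_mem hF₀, (by rw [pair_comm, ← h]; exact facet_mem hE4),
      (by rw [pair_comm]; exact facet_mem hE3), (by rw [pair_comm]; exact facet_mem hE1),
      haf, hbc⟩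
    exact card_four hab (Ne.symm hfa) (Ne.symm hca) (Ne.symm hfb) (Ne.symm hcb) hfc
  have hsub : ({({a, b} : Finset V), {a, c}, {b, e}, {c, f}, {f, g}} :
      Finset (Finset V)) ⊆ facets K := by
    intro S hS
    simp only [mem_insert, mem_singleton] at hS
    rcases hS with rfl | rfl | rfl | rfl | rfl
    exacts [hF₀, hE1, hE2, hE3, hE4]
  have hne' : ∀ (s t : Finset V) (x : V), x ∈ s → x ∉ t → s ≠ t :=
    fun s t x hx hx' h => hx' (h ▸ hx)
  have hcard5 : ({({a, b} : Finset V), {a, c}, {b, e}, {c, f}, {f, g}} :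
      Finset (Finset V)).card = 5 := by
    have n1 : ({a, b} : Finset V) ≠ {a, c} :=
      hne' _ _ b (by simp) (by simp [Ne.symm hab, Ne.symm hcb])
    have n2 : ({a, b} : Finset V) ≠ {b, e} :=
      hne' _ _ a (by simp) (by simp [hab, Ne.symm hea])
    have n3 : ({a, b} : Finset V) ≠ {c, f} :=
      hne' _ _ a (by simp) (by simp [Ne.symm hca, Ne.symm hfa])
    have n4 : ({a, b} : Finset V) ≠ {f, g} :=
      hne' _ _ a (by simp) (by simp [Ne.symm hfa, Ne.symm hga])
    have n5 : ({a, c} : Finset V) ≠ {b, e} :=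
      hne' _ _ a (by simp) (by simp [hab, Ne.symm hea])
    have n6 : ({a, c} : Finset V) ≠ {c, f} :=
      hne' _ _ a (by simp) (by simp [Ne.symm hca, Ne.symm hfa])
    have n7 : ({a, c} : Finset V) ≠ {f, g} :=
      hne' _ _ a (by simp) (by simp [Ne.symm hfa, Ne.symm hga])
    have n8 : ({b, e} : Finset V) ≠ {c, f} :=
      hne' _ _ b (by simp) (by simp [Ne.symm hcb, Ne.symm hfb])
    have n9 : ({b, e} : Finset V) ≠ {f, g} :=
      hne' _ _ b (by simp) (by simp [Ne.symm hfb, Ne.symm hgb])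
    have n10 : ({c, f} : Finset V) ≠ {f, g} :=
      hne' _ _ c (by simp) (by simp [Ne.symm hfc, Ne.symm hgc])
    rw [card_insert_of_notMem (by simp [n1, n2, n3, n4]),
      card_insert_of_notMem (by simp [n5, n6, n7]),
      card_insert_of_notMem (by simp [n8, n9]),
      card_insert_of_notMem (by simp [n10]), card_singleton]
  rw [fNum_eq_card_facets hK hpure]
  calc 5 = _ := hcard5.symm
    _ ≤ (facets K).card := Finset.card_le_card hsub

end Base

noncomputable def gB : ℕ → ℝ
  | 0 => 5
  | n + 1 => gB n ^ 2 / (n + 3)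

lemma gB_pos (n : ℕ) : 0 < gB n := by
  induction n with
  | zero => norm_num [gB]
  | succ n ih =>
    rw [gB]
    positivity

lemma gB_closed (n : ℕ) :
    gB n = 5 ^ 2 ^ n / ∏ i ∈ Finset.range n, ((n + 2 - i : ℕ) : ℝ) ^ 2 ^ i := by
  induction n with
  | zero => simp [gB]
  | succ n ih =>
    have hP : (0 : ℝ) < ∏ i ∈ Finset.range n, ((n + 2 - i : ℕ) : ℝ) ^ 2 ^ i := by
      apply Finset.prod_pos
      intro i hi
      rw [Finset.mem_range] at hi
      have : 0 < n + 2 - i := by omega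
      positivity
    have hprod : ∏ i ∈ Finset.range (n + 1), ((n + 1 + 2 - i : ℕ) : ℝ) ^ 2 ^ i
        = (∏ i ∈ Finset.range n, ((n + 2 - i : ℕ) : ℝ) ^ 2 ^ i) ^ 2 * ((n : ℝ) + 3) := by
      rw [Finset.prod_range_succ']
      have h1 : ∀ i ∈ Finset.range n, ((n + 1 + 2 - (i + 1) : ℕ) : ℝ) ^ 2 ^ (i + 1)
          = (((n + 2 - i : ℕ) : ℝ) ^ 2 ^ i) ^ 2 := by
        intro i _
        have he : (n + 1 + 2 - (i + 1) : ℕ) = (n + 2 - i : ℕ) := by omega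
        rw [he, ← pow_mul, pow_succ]
      rw [Finset.prod_congr rfl h1, Finset.prod_pow]
      have h0 : ((n + 1 + 2 - 0 : ℕ) : ℝ) ^ 2 ^ 0 = ((n : ℝ) + 3) := by
        push_cast
        ring
      rw [h0]
    have h5 : ((5 : ℝ) ^ 2 ^ n) ^ 2 = 5 ^ 2 ^ (n + 1) := by
      rw [← pow_mul, pow_succ]
    rw [gB, ih, hprod, div_pow, h5, div_div]

lemma card_facets_link {K : Finset (Finset V)} {v : V} (hK : IsComplex K) :
    (facets (link K {v})).card = ((facets K).filter fun F => v ∈ F).card := by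
  refine Finset.card_bij' (fun τ _ => τ ∪ {v}) (fun F _ => F.erase v) ?_ ?_ ?_ ?_
  · intro τ hτ
    rw [link_facet_iff hK] at hτ
    exact mem_filter.mpr ⟨hτ.2, mem_union_right _ (mem_singleton_self v)⟩
  · intro F hF
    rw [mem_filter] at hF
    rw [link_facet_iff hK]
    exact ⟨notMem_erase v F, by rw [erase_union_singleton hF.2]; exact hF.1⟩
  · intro τ hτ
    rw [link_facet_iff hK] at hτ
    show (τ ∪ {v}).erase v = τ
    rw [union_comm, ← insert_eq, erase_insert hτ.1]
  · intro F hF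
    rw [mem_filter] at hF
    show F.erase v ∪ {v} = F
    exact erase_union_singleton hF.2

lemma step_lemma (n : ℕ) (K : Finset (Finset V)) (hK : IsComplex K)
    (hpure : IsPure K (n + 2)) (hflag : IsFlag K) (hns : NoSquare K)
    (hfree : NoFree K (n + 2))
    (hlink : ∀ v : V, ({v} : Finset V) ∈ K → gB n ≤ (fNum (link K {v}) (n + 1) : ℝ)) :
    gB (n + 1) + gB n ≤ (fNum K (n + 2) : ℝ) := by
  classical
  set verts := univ.filter fun u : V => ({u} : Finset V) ∈ K with hverts
  have hLv : ∀ v ∈ verts, gB n ≤ (((facets K).filter fun F => v ∈ F).card : ℝ) := by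
    intro v hv
    rw [hverts, mem_filter] at hv
    have h1 := hlink v hv.2
    rwa [fNum_eq_card_facets (link_complex hK hv.2) (link_pure hK hpure),
      card_facets_link hK] at h1
  obtain ⟨F₁, hF₁, -⟩ := exists_facet hK hK.1
  have hF₁ne : F₁.Nonempty := by
    rw [← Finset.card_pos, hpure F₁ hF₁]
    omega
  obtain ⟨v₀, hv₀⟩ := hF₁ne
  have hv₀K : ({v₀} : Finset V) ∈ K :=
    face_sub_mem hK (facet_mem hF₁) (singleton_subset_iff.mpr hv₀)
  have hv₀verts : v₀ ∈ verts := mem_filter.mpr ⟨mem_univ _, hv₀K⟩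
  have hvb := vertex_bound hK hpure hflag hns hfree hv₀K
  have hvc : gB n + ((n : ℝ) + 3) ≤ (verts.card : ℝ) := by
    have h2 := hLv v₀ hv₀verts
    have h3 : (((facets K).filter fun F => v₀ ∈ F).card : ℝ) + ((n : ℝ) + 3)
        ≤ (verts.card : ℝ) := by
      rw [hverts]
      push_cast
      exact_mod_cast hvb
    linarith
  have hsum := sum_count (K := K) hpure
  have hsum2 : (verts.card : ℝ) * gB n ≤ ((n : ℝ) + 3) * (fNum K (n + 2) : ℝ) := by
    calc (verts.card : ℝ) * gB n = ∑ _v ∈ verts, gB n := by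
          rw [Finset.sum_const, nsmul_eq_mul]
      _ ≤ ∑ v ∈ verts, (((facets K).filter fun F => v ∈ F).card : ℝ) :=
          Finset.sum_le_sum hLv
      _ = ((∑ v ∈ verts, ((facets K).filter fun F => v ∈ F).card : ℕ) : ℝ) := by
          push_cast
          rfl
      _ ≤ (((n + 2 + 1) * (facets K).card : ℕ) : ℝ) := by exact_mod_cast hsum
      _ = ((n : ℝ) + 3) * (fNum K (n + 2) : ℝ) := by
          rw [fNum_eq_card_facets hK hpure]
          push_cast
          ring
  have hg := gB_pos n
  have h33 : (0 : ℝ) < (n : ℝ) + 3 := by positivity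
  have hkey : gB n ^ 2 + ((n : ℝ) + 3) * gB n ≤ ((n : ℝ) + 3) * (fNum K (n + 2) : ℝ) := by
    nlinarith [mul_le_mul_of_nonneg_right hvc (le_of_lt hg)]
  have hdiv : gB n ^ 2 / ((n : ℝ) + 3) ≤ (fNum K (n + 2) : ℝ) - gB n := by
    rw [div_le_iff₀ h33]
    nlinarith
  have : gB (n + 1) = gB n ^ 2 / ((n : ℝ) + 3) := by rw [gB]
  linarith

lemma main_lemma : ∀ (n : ℕ) (K : Finset (Finset V)), IsComplex K → IsPure K (n + 1) →
    IsFlag K → NoSquare K → NoFree K (n + 1) → gB n ≤ (fNum K (n + 1) : ℝ) := by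
  intro n
  induction n with
  | zero =>
    intro K hK hpure hflag hns hfree
    have := base_case hK hpure hflag hns hfree
    show (5 : ℝ) ≤ _
    exact_mod_cast this
  | succ n ih =>
    intro K hK hpure hflag hns hfree
    have hstep := step_lemma n K hK hpure hflag hns hfree (fun v hv =>
      ih (link K {v}) (link_complex hK hv) (link_pure hK hpure)
        (link_flag hK hv hflag) (link_nosquare hK hv hflag hns)
        (link_nofree hK hfree))
    have := gB_pos n
    linarith

/-- A pure `d`-dimensional (`d ≥ 2`) flag-no-square simplicial complex with no
free `(d-1)`-faces has more than `5 ^ (2 ^ (d-1)) / ∏_{i=0}^{d-2} (d+1-i) ^ (2 ^ i)`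
facets. -/
theorem facets_lower_bound_product {V : Type} [DecidableEq V] [Fintype V]
    (d : ℕ) (hd : 2 ≤ d) (K : Finset (Finset V))
    (hK : IsComplex K) (hvert : ∀ v : V, ({v} : Finset V) ∈ K)
    (hpure : IsPure K d) (hflag : IsFlag K) (hns : NoSquare K)
    (hfree : NoFree K d) :
    (5 : ℝ) ^ 2 ^ (d - 1) / ∏ i ∈ Finset.range (d - 1), ((d + 1 - i : ℕ) : ℝ) ^ 2 ^ i
      < (fNum K d : ℝ) := by
  obtain ⟨n, rfl⟩ : ∃ n, d = n + 2 := ⟨d - 2, by omega⟩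
  have hd1 : n + 2 - 1 = n + 1 := by omega
  rw [hd1]
  have harg : ∀ i, (n + 2 + 1 - i) = (n + 1 + 2 - i) := fun i => by omega
  simp only [harg]
  rw [← gB_closed (n + 1)]
  have hstep := step_lemma n K hK hpure hflag hns hfree (fun v hv =>
    main_lemma n (link K {v}) (link_complex hK hv) (link_pure hK hpure)
      (link_flag hK hv hflag) (link_nosquare hK hv hflag hns)
      (link_nofree hK hfree))
  have := gB_pos n
  linarith
end

section
/- Let d ≥ 3 be an integer and let h_0, h_1, …, h_d be nonnegative integers satisfying the symmetry h_i = h_{d−i} for all i, with h_0 ≥ 1. Then C(d,2) · (Σ_{i=0}^{d} h_i) < 6 · (Σ_{i=0}^{d−2} C(d−i,2) · h_i). (Interpreting f_{d−1} = Σ_{i=0}^{d} h_i and f_{d−3} = Σ_{i=0}^{d−2} C(d−i,2) h_i as entries of the f-vector of a Gorenstein* complex with h-vector (h_i), this says the average number C(d,2)·f_{d−1}/f_{d−3} of facets containing a (d−3)-face is strictly less than 6.) -/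
open Finset

lemma two_mul_choose_two : ∀ n : ℕ, 2 * n.choose 2 = n * (n - 1)
  | 0 => rfl
  | (m+1) => by
    rw [Nat.choose_succ_succ, Nat.mul_add, two_mul_choose_two m, Nat.choose_one_right]
    cases m with
    | zero => rfl
    | succ k =>
      simp only [Nat.add_sub_cancel]
      ring

lemma key_choose (d i : ℕ) (hd : 3 ≤ d) (hi : i ≤ d) :
    d.choose 2 ≤ 3 * ((d - i).choose 2 + i.choose 2) := by
  have h1 := two_mul_choose_two d
  have h2 := two_mul_choose_two (d - i)
  have h3 := two_mul_choose_two i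
  rcases Nat.eq_zero_or_pos i with rfl | hi1
  · simp only [Nat.sub_zero] at *
    omega
  rcases eq_or_lt_of_le hi with rfl | hlt
  · simp only [Nat.sub_self] at *
    omega
  have hkey : d * (d - 1) ≤ 3 * ((d - i) * (d - i - 1) + i * (i - 1)) := by
    obtain ⟨a, rfl⟩ : ∃ a, i = a + 1 := ⟨i - 1, by omega⟩
    obtain ⟨b, hb⟩ : ∃ b, d = a + b + 2 := ⟨d - a - 2, by omega⟩
    subst hb
    clear h1 h2 h3 hi hlt
    have e1 : a + b + 2 - 1 = a + b + 1 := by omega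
    have e2 : a + b + 2 - (a + 1) = b + 1 := by omega
    have e4 : a + 1 - 1 = a := rfl
    rw [e1, e2, e4]
    have e3 : b + 1 - 1 = b := rfl
    rw [e3]
    have hab : 1 ≤ a + b := by omega
    rcases Nat.eq_zero_or_pos a with rfl | ha
    · nlinarith
    rcases Nat.eq_zero_or_pos b with rfl | hb
    · nlinarith
    have hsq : 2 * (a * b) ≤ a * a + b * b := by
      rcases le_total a b with hab' | hab'
      · obtain ⟨c, rfl⟩ := Nat.exists_eq_add_of_le hab'
        nlinarith
      · obtain ⟨c, rfl⟩ := Nat.exists_eq_add_of_le hab'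
        nlinarith
    nlinarith [Nat.mul_le_mul ha hb, hsq]
  omega

/-- Averaging lemma for `N₃`: if `d ≥ 3` and `(h_i)` are nonnegative integers
with `h_i = h_{d-i}` and `h_0 ≥ 1`, then
`C(d,2) · Σ_{i=0}^d h_i < 6 · Σ_{i=0}^{d-2} C(d-i,2) · h_i`. -/
theorem average_lt_six (d : ℕ) (hd : 3 ≤ d) (h : ℕ → ℕ)
    (hsym : ∀ i ≤ d, h i = h (d - i)) (h0 : 1 ≤ h 0) :
    d.choose 2 * ∑ i ∈ Finset.range (d + 1), h i <
      6 * ∑ i ∈ Finset.range (d - 1), (d - i).choose 2 * h i := by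
  have hA : ∑ i ∈ Finset.range (d - 1), (d - i).choose 2 * h i
      = ∑ i ∈ Finset.range (d + 1), (d - i).choose 2 * h i := by
    apply Finset.sum_subset
    · intro x hx
      simp only [mem_range] at *
      omega
    · intro x hx hnx
      simp only [mem_range] at hx hnx
      have : (d - x).choose 2 = 0 := Nat.choose_eq_zero_of_lt (by omega)
      simp [this]
  have hB : ∑ i ∈ Finset.range (d + 1), (d - i).choose 2 * h i
      = ∑ i ∈ Finset.range (d + 1), i.choose 2 * h i := by
    have hcong : ∀ i ∈ Finset.range (d + 1),
        (d - i).choose 2 * h i = (d - i).choose 2 * h (d - i) := by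
      intro i hi
      rw [← hsym i (by simpa [Nat.lt_succ_iff] using hi)]
    rw [Finset.sum_congr rfl hcong]
    have hrefl := Finset.sum_range_reflect (fun i => i.choose 2 * h i) (d + 1)
    simpa using hrefl
  have hlt : ∑ i ∈ Finset.range (d + 1), d.choose 2 * h i
      < ∑ i ∈ Finset.range (d + 1), 3 * ((d - i).choose 2 + i.choose 2) * h i := by
    apply Finset.sum_lt_sum
    · intro i hi
      exact Nat.mul_le_mul_right _ (key_choose d i hd (by simpa [Nat.lt_succ_iff] using hi))
    · refine ⟨0, by simp, ?_⟩
      have h3 : 3 ≤ d.choose 2 := by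
        calc 3 = Nat.choose 3 2 := rfl
        _ ≤ d.choose 2 := Nat.choose_le_choose 2 hd
      simp only [Nat.sub_zero]
      have : Nat.choose 0 2 = 0 := rfl
      rw [this]
      have hpos : 1 ≤ d.choose 2 * h 0 := Nat.one_le_iff_ne_zero.mpr (by positivity)
      nlinarith
  have h6 : ∑ i ∈ Finset.range (d + 1), 3 * ((d - i).choose 2 + i.choose 2) * h i
      = 6 * ∑ i ∈ Finset.range (d + 1), (d - i).choose 2 * h i := by
    have : (6 : ℕ) * ∑ i ∈ Finset.range (d + 1), (d - i).choose 2 * h i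
        = 3 * (∑ i ∈ Finset.range (d + 1), (d - i).choose 2 * h i)
          + 3 * (∑ i ∈ Finset.range (d + 1), i.choose 2 * h i) := by
      rw [← hB]; ring
    rw [this, Finset.mul_sum, Finset.mul_sum, ← Finset.sum_add_distrib]
    apply Finset.sum_congr rfl
    intro i _
    ring
  calc d.choose 2 * ∑ i ∈ Finset.range (d + 1), h i
      = ∑ i ∈ Finset.range (d + 1), d.choose 2 * h i := Finset.mul_sum _ _ _
    _ < ∑ i ∈ Finset.range (d + 1), 3 * ((d - i).choose 2 + i.choose 2) * h i := hlt
    _ = 6 * ∑ i ∈ Finset.range (d + 1), (d - i).choose 2 * h i := h6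
    _ = 6 * ∑ i ∈ Finset.range (d - 1), (d - i).choose 2 * h i := by rw [hA]
end

section
/- Let Δ be a 2-dimensional flag-no-square simplicial complex, let e be a free edge of Δ, and let F be the unique 2-dimensional face of Δ containing e. Then the complex obtained from Δ by removing the two faces e and F (the elementary collapse of the pair (e,F)) is again a flag-no-square simplicial complex. -/
open Finset

variable {V : Type} [DecidableEq V] [Fintype V]

lemma card_three_le' (x y z : V) : ({x, y, z} : Finset V).card ≤ 3 := by
  apply le_trans (Finset.card_insert_le _ _)
  have h := Finset.card_insert_le y ({z} : Finset V)
  simp at h ⊢; omega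

lemma four_distinct' (a b c d : V) (h : ({a, b, c, d} : Finset V).card = 4) :
    a ≠ b ∧ a ≠ c ∧ a ≠ d ∧ b ≠ c ∧ b ≠ d ∧ c ≠ d := by
  refine ⟨?_, ?_, ?_, ?_, ?_, ?_⟩ <;> rintro rfl
  · have hs : ({a, a, c, d} : Finset V) ⊆ {a, c, d} := by
      intro x; simp only [Finset.mem_insert, Finset.mem_singleton]; tauto
    have := le_trans (Finset.card_le_card hs) (card_three_le' a c d); omega
  · have hs : ({a, b, a, d} : Finset V) ⊆ {a, b, d} := by
      intro x; simp only [Finset.mem_insert, Finset.mem_singleton]; tauto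
    have := le_trans (Finset.card_le_card hs) (card_three_le' a b d); omega
  · have hs : ({a, b, c, a} : Finset V) ⊆ {a, b, c} := by
      intro x; simp only [Finset.mem_insert, Finset.mem_singleton]; tauto
    have := le_trans (Finset.card_le_card hs) (card_three_le' a b c); omega
  · have hs : ({a, b, b, d} : Finset V) ⊆ {a, b, d} := by
      intro x; simp only [Finset.mem_insert, Finset.mem_singleton]; tauto
    have := le_trans (Finset.card_le_card hs) (card_three_le' a b d); omega
  · have hs : ({a, b, c, b} : Finset V) ⊆ {a, b, c} := by
      intro x; simp only [Finset.mem_insert, Finset.mem_singleton]; tauto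
    have := le_trans (Finset.card_le_card hs) (card_three_le' a b c); omega
  · have hs : ({a, b, c, c} : Finset V) ⊆ {a, b, c} := by
      intro x; simp only [Finset.mem_insert, Finset.mem_singleton]; tauto
    have := le_trans (Finset.card_le_card hs) (card_three_le' a b c); omega

/-- Collapsing a free edge of a 2-dimensional flag-no-square simplicial
complex, together with the unique triangle containing it, yields again a
flag-no-square simplicial complex. -/
theorem collapse_free_edge {V : Type} [DecidableEq V] [Fintype V]
    (K : Finset (Finset V))
    (hK : IsComplex K) (hvert : ∀ v : V, ({v} : Finset V) ∈ K)
    -- `K` is 2-dimensional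
    (hdim : ∀ σ ∈ K, σ.card ≤ 3) (hdim' : ∃ σ ∈ K, σ.card = 3)
    (hflag : IsFlag K) (hns : NoSquare K)
    (e B : Finset V) (he : e ∈ K) (hecard : e.card = 2)
    (hB : B ∈ K) (hBcard : B.card = 3) (heB : e ⊆ B)
    -- `e` is free: `B` is the unique 2-face containing `e`
    (hfree : ∀ G ∈ K, G.card = 3 → e ⊆ G → G = B) :
    IsComplex ((K.erase e).erase B) ∧
      (∀ v : V, ({v} : Finset V) ∈ (K.erase e).erase B) ∧
      IsFlag ((K.erase e).erase B) ∧ NoSquare ((K.erase e).erase B) := by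
  have heB' : e ≠ B := by intro h; rw [h] at hecard; omega
  have hmem : ∀ σ : Finset V, σ ∈ (K.erase e).erase B ↔ σ ≠ B ∧ σ ≠ e ∧ σ ∈ K := by
    intro σ; simp [Finset.mem_erase, and_assoc]
  have hstay : ∀ σ ∈ K, σ ≠ e → σ ≠ B → σ ∈ (K.erase e).erase B := by
    intro σ hσ h1 h2; exact (hmem σ).mpr ⟨h2, h1, hσ⟩
  have henot : e ∉ (K.erase e).erase B := by
    intro h; exact ((hmem e).mp h).2.1 rfl
  obtain ⟨u, w, huw, hue⟩ := Finset.card_eq_two.mp hecard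
  refine ⟨⟨?_, ?_⟩, ?_, ?_, ?_⟩
  · -- ∅ ∈ K'
    refine hstay ∅ hK.1 ?_ ?_ <;> intro h
    · rw [← h] at hecard; simp at hecard
    · rw [← h] at hBcard; simp at hBcard
  · -- closed under subsets
    intro σ hσ τ hτ
    obtain ⟨hσB, hσe, hσK⟩ := (hmem σ).mp hσ
    have hτK : τ ∈ K := hK.2 σ hσK τ hτ
    refine hstay τ hτK ?_ ?_
    · rintro rfl
      have hcard := hdim σ hσK
      have h2 : 2 ≤ σ.card := hecard ▸ Finset.card_le_card hτ
      interval_cases h : σ.card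
      · exact hσe (Finset.eq_of_subset_of_card_le hτ (by omega)).symm
      · exact hσB (hfree σ hσK h hτ)
    · rintro rfl
      have := Finset.card_le_card hτ
      have := hdim σ hσK
      exact hσB (Finset.eq_of_subset_of_card_le hτ (by omega)).symm
  · -- vertices
    intro v
    refine hstay {v} (hvert v) ?_ ?_ <;> intro h
    · rw [← h] at hecard; simp at hecard
    · rw [← h] at hBcard; simp at hBcard
  · -- flag
    intro τ hv hedge
    have hτK : τ ∈ K :=
      hflag τ (fun v hv' => ((hmem _).mp (hv v hv')).2.2)
        (fun x hx y hy hxy => ((hmem _).mp (hedge x hx y hy hxy)).2.2)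
    refine hstay τ hτK ?_ ?_
    · rintro rfl
      have hmem' : u ∈ τ ∧ w ∈ τ := by rw [hue]; simp
      exact henot (hue ▸ hedge u hmem'.1 w hmem'.2 huw)
    · rintro rfl
      have hu : u ∈ τ := heB (by rw [hue]; simp)
      have hw : w ∈ τ := heB (by rw [hue]; simp)
      exact henot (hue ▸ hedge u hu w hw huw)
  · -- no square
    rintro ⟨a, b, c, d, hcard4, hab, hbc, hcd, hda, hac, hbd⟩
    obtain ⟨nab, nac, nad, nbc, nbd, ncd⟩ := four_distinct' a b c d hcard4
    have habK := ((hmem _).mp hab).2.2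
    have hbcK := ((hmem _).mp hbc).2.2
    have hcdK := ((hmem _).mp hcd).2.2
    have hdaK := ((hmem _).mp hda).2.2
    have pair_e : ∀ x y : V, ({x, y} : Finset V) ∈ K →
        ({x, y} : Finset V) ∉ (K.erase e).erase B → ({x, y} : Finset V) = e := by
      intro x y hK' hn
      by_contra h
      refine hn (hstay _ hK' h ?_)
      intro hEq
      rw [← hEq] at hBcard
      have h2 : ({x, y} : Finset V).card ≤ 2 :=
        le_trans (Finset.card_insert_le _ _) (by simp)
      omega
    by_cases h1 : ({a, c} : Finset V) ∈ K
    · have hace : ({a, c} : Finset V) = e := pair_e a c h1 hac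
      have hca : ({c, a} : Finset V) ∈ K := by rw [Finset.pair_comm]; exact h1
      have habc : ({a, b, c} : Finset V) ∈ K := by
        refine hflag _ (fun v _ => hvert v) ?_
        intro x hx y hy hxy
        simp only [Finset.mem_insert, Finset.mem_singleton] at hx hy
        rcases hx with rfl | rfl | rfl <;> rcases hy with rfl | rfl | rfl <;>
          first
            | exact absurd rfl hxy
            | assumption
            | (rw [Finset.pair_comm]; assumption)
      have hacd : ({a, c, d} : Finset V) ∈ K := by
        refine hflag _ (fun v _ => hvert v) ?_
        intro x hx y hy hxy
        simp only [Finset.mem_insert, Finset.mem_singleton] at hx hy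
        rcases hx with rfl | rfl | rfl <;> rcases hy with rfl | rfl | rfl <;>
          first
            | exact absurd rfl hxy
            | assumption
            | (rw [Finset.pair_comm]; assumption)
      have c1 : ({a, b, c} : Finset V).card = 3 :=
        Finset.card_eq_three.mpr ⟨a, b, c, nab, nac, nbc, rfl⟩
      have c2 : ({a, c, d} : Finset V).card = 3 :=
        Finset.card_eq_three.mpr ⟨a, c, d, nac, nad, ncd, rfl⟩
      have e1 : ({a, b, c} : Finset V) = B :=
        hfree _ habc c1 (by
          rw [← hace]
          intro x hx
          simp only [Finset.mem_insert, Finset.mem_singleton] at hx ⊢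
          tauto)
      have e2 : ({a, c, d} : Finset V) = B :=
        hfree _ hacd c2 (by
          rw [← hace]
          intro x hx
          simp only [Finset.mem_insert, Finset.mem_singleton] at hx ⊢
          tauto)
      have hd : d ∈ ({a, b, c} : Finset V) := by rw [e1, ← e2]; simp
      simp only [Finset.mem_insert, Finset.mem_singleton] at hd
      rcases hd with rfl | rfl | rfl
      · exact nad rfl
      · exact nbd rfl
      · exact ncd rfl
    · by_cases h2 : ({b, d} : Finset V) ∈ K
      · have hbde : ({b, d} : Finset V) = e := pair_e b d h2 hbd
        have hdb : ({d, b} : Finset V) ∈ K := by rw [Finset.pair_comm]; exact h2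
        have hba : ({b, a} : Finset V) ∈ K := by rw [Finset.pair_comm]; exact habK
        have had : ({a, d} : Finset V) ∈ K := by rw [Finset.pair_comm]; exact hdaK
        have habd : ({a, b, d} : Finset V) ∈ K := by
          refine hflag _ (fun v _ => hvert v) ?_
          intro x hx y hy hxy
          simp only [Finset.mem_insert, Finset.mem_singleton] at hx hy
          rcases hx with rfl | rfl | rfl <;> rcases hy with rfl | rfl | rfl <;>
            first
              | exact absurd rfl hxy
              | assumption
              | (rw [Finset.pair_comm]; assumption)
        have hbcd : ({b, c, d} : Finset V) ∈ K := by
          refine hflag _ (fun v _ => hvert v) ?_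
          intro x hx y hy hxy
          simp only [Finset.mem_insert, Finset.mem_singleton] at hx hy
          rcases hx with rfl | rfl | rfl <;> rcases hy with rfl | rfl | rfl <;>
            first
              | exact absurd rfl hxy
              | assumption
              | (rw [Finset.pair_comm]; assumption)
        have c1 : ({a, b, d} : Finset V).card = 3 :=
          Finset.card_eq_three.mpr ⟨a, b, d, nab, nad, nbd, rfl⟩
        have c2 : ({b, c, d} : Finset V).card = 3 :=
          Finset.card_eq_three.mpr ⟨b, c, d, nbc, nbd, ncd, rfl⟩
        have e1 : ({a, b, d} : Finset V) = B :=
          hfree _ habd c1 (by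
          rw [← hbde]
          intro x hx
          simp only [Finset.mem_insert, Finset.mem_singleton] at hx ⊢
          tauto)
        have e2 : ({b, c, d} : Finset V) = B :=
          hfree _ hbcd c2 (by
          rw [← hbde]
          intro x hx
          simp only [Finset.mem_insert, Finset.mem_singleton] at hx ⊢
          tauto)
        have ha : a ∈ ({b, c, d} : Finset V) := by rw [e2, ← e1]; simp
        simp only [Finset.mem_insert, Finset.mem_singleton] at ha
        rcases ha with rfl | rfl | rfl
        · exact nab rfl
        · exact nac rfl
        · exact nad rfl
      · exact hns ⟨a, b, c, d, hcard4, habK, hbcK, hcdK, hdaK, h1, h2⟩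
end
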